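/- Let n ≥ 1 and α ∈ (0,1). There is a constant C = C(n,α) > 0 with the following property: for every locally integrable f : ℝⁿ → ℂ with ‖f‖_{𝓛_{2,n−2α}} < ∞, every x₀ ∈ ℝⁿ, every r > 0, every t > 0, and every y ∈ B(x₀,r), ∫_{ℝⁿ∖B(x₀,2r)} t |f(z) − f_{B(x₀,2r)}| / (t + |y−z|)^{n+1} dz ≤ C t r^{−(1+α)} ‖f‖_{𝓛_{2,n−2α}}, where f_{B(x₀,2r)} denotes the average of f over the ball B(x₀,2r). -/

import Mathlib

open MeasureTheory Metric Real
open scoped ENNReal NNReal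

noncomputable section

/-- The Campanato norm `‖f‖_{𝓛_{2,n−2α}}`. -/
def CampanatoNorm (n : ℕ) (α : ℝ) (f : EuclideanSpace ℝ (Fin n) → ℂ) : ℝ≥0∞ :=
  ⨆ (r : ℝ) (_ : 0 < r) (x : EuclideanSpace ℝ (Fin n)),
    (ENNReal.ofReal (r ^ (2 * (α - (n : ℝ)))) *
      ∫⁻ y in Metric.ball x r, ∫⁻ z in Metric.ball x r,
        (‖f y - f z‖₊ : ℝ≥0∞) ^ 2) ^ (1 / 2 : ℝ)

/-! ### Auxiliary lemmas -/

lemma aux_cs_one {β : Type*} [MeasurableSpace β] (μ : Measure β) (h : β → ℝ≥0∞)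
    (hh : AEMeasurable h μ) :
    ∫⁻ a, h a ∂μ ≤ (μ Set.univ) ^ (1/2 : ℝ) * (∫⁻ a, h a ^ 2 ∂μ) ^ (1/2 : ℝ) := by
  have hconj : Real.HolderConjugate 2 2 := ⟨by norm_num, by norm_num, by norm_num⟩
  have := ENNReal.lintegral_mul_le_Lp_mul_Lq μ hconj (aemeasurable_const (b := (1:ℝ≥0∞))) hh
  simpa using this

lemma aux_telescope (c : ℕ → ℂ) (k : ℕ) :
    (‖c (k+1) - c 0‖₊ : ℝ≥0∞) ≤ ∑ j ∈ Finset.range (k+1), (‖c (j+1) - c j‖₊ : ℝ≥0∞) := by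
  induction k with
  | zero => simp
  | succ m ih =>
      have h1 : (‖c (m+2) - c 0‖₊ : ℝ≥0∞) ≤ ‖c (m+2) - c (m+1)‖₊ + ‖c (m+1) - c 0‖₊ := by
        have := nnnorm_add_le (c (m+2) - c (m+1)) (c (m+1) - c 0)
        simp only [sub_add_sub_cancel] at this
        exact_mod_cast this
      rw [Finset.sum_range_succ]
      calc (‖c (m+1+1) - c 0‖₊ : ℝ≥0∞) ≤ ‖c (m+2) - c (m+1)‖₊ + ‖c (m+1) - c 0‖₊ := h1
        _ ≤ (‖c (m+2) - c (m+1)‖₊ : ℝ≥0∞) + ∑ j ∈ Finset.range (m+1), (‖c (j+1) - c j‖₊ : ℝ≥0∞) :=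
            add_le_add le_rfl ih
        _ = _ := by rw [add_comm]

lemma aux_camp (n : ℕ) (α : ℝ) (f : EuclideanSpace ℝ (Fin n) → ℂ) {R : ℝ} (hR : 0 < R)
    (x : EuclideanSpace ℝ (Fin n)) :
    ∫⁻ y in Metric.ball x R, ∫⁻ z in Metric.ball x R, (‖f y - f z‖₊ : ℝ≥0∞) ^ 2 ≤
      ENNReal.ofReal (R ^ (2 * ((n : ℝ) - α))) * (CampanatoNorm n α f) ^ 2 := by
  set D := ∫⁻ y in Metric.ball x R, ∫⁻ z in Metric.ball x R, (‖f y - f z‖₊ : ℝ≥0∞) ^ 2 with hD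
  set N := CampanatoNorm n α f with hN
  have h1 : (ENNReal.ofReal (R ^ (2 * (α - (n : ℝ)))) * D) ^ (1/2 : ℝ) ≤ N :=
    le_iSup_of_le R <| le_iSup_of_le hR <| le_iSup_of_le x le_rfl
  have h2 : ENNReal.ofReal (R ^ (2 * (α - (n : ℝ)))) * D ≤ N ^ 2 := by
    have := ENNReal.rpow_le_rpow h1 (by norm_num : (0:ℝ) ≤ 2)
    rw [← ENNReal.rpow_mul] at this
    norm_num at this
    exact this
  have hone : ENNReal.ofReal (R ^ (2 * ((n : ℝ) - α))) * ENNReal.ofReal (R ^ (2 * (α - (n:ℝ)))) = 1 := by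
    rw [← ENNReal.ofReal_mul (by positivity), ← Real.rpow_add hR,
      show 2*((n:ℝ)-α)+2*(α-(n:ℝ)) = 0 by ring, Real.rpow_zero]
    norm_num
  calc D = ENNReal.ofReal (R ^ (2 * ((n : ℝ) - α))) * (ENNReal.ofReal (R ^ (2 * (α - (n:ℝ)))) * D) := by
        rw [← mul_assoc, hone, one_mul]
    _ ≤ ENNReal.ofReal (R ^ (2 * ((n : ℝ) - α))) * N ^ 2 := mul_le_mul_right h2 _

lemma aux_decomp (n : ℕ) (x₀ : EuclideanSpace ℝ (Fin n)) {r : ℝ} (hr : 0 < r) :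
    (Metric.ball x₀ (2*r))ᶜ =
      ⋃ k : ℕ, (Metric.ball x₀ (2^(k+2) * r) \ Metric.ball x₀ (2^(k+1) * r)) := by
  ext z
  simp only [Set.mem_compl_iff, mem_ball, not_lt, Set.mem_iUnion, Set.mem_diff]
  constructor
  · intro hz
    have hex : ∃ m : ℕ, dist z x₀ < 2^(m+1) * r := by
      obtain ⟨m, hm⟩ := pow_unbounded_of_one_lt (dist z x₀ / r) (one_lt_two (α := ℝ))
      exact ⟨m, by
        have : dist z x₀ < 2 ^ m * r := by
          rw [div_lt_iff₀ hr] at hm; linarith [hm]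
        calc dist z x₀ < 2^m * r := this
          _ ≤ 2^(m+1) * r := by
              have : (2:ℝ)^m ≤ 2^(m+1) := by
                apply pow_le_pow_right₀ one_le_two (Nat.le_succ m)
              nlinarith⟩
    classical
    let m := Nat.find hex
    have hm : dist z x₀ < 2^(m+1) * r := Nat.find_spec hex
    have hm1 : 1 ≤ m := by
      by_contra h
      push_neg at h
      interval_cases m
      · have h2 : dist z x₀ < 2 * r := by
          have := hm
          norm_num at this
          linarith
        linarith
    refine ⟨m - 1, ?_, ?_⟩
    · rw [show m - 1 + 2 = m + 1 by omega]
      exact hm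
    · have hnot := Nat.find_min hex (show m - 1 < m by omega)
      rw [show m - 1 + 1 = m by omega] at hnot ⊢
      exact not_lt.mp hnot
  · rintro ⟨k, hk1, hk2⟩
    have : (2:ℝ) * r ≤ 2^(k+1) * r := by
      have : (2:ℝ) ≤ 2^(k+1) := by
        calc (2:ℝ) = 2^1 := (pow_one 2).symm
          _ ≤ 2^(k+1) := pow_le_pow_right₀ one_le_two (by omega)
      nlinarith
    linarith [hk2]

lemma aux_avg {n : ℕ} (g : EuclideanSpace ℝ (Fin n) → ℂ) (c' : ℂ)
    {s : Set (EuclideanSpace ℝ (Fin n))} (hgi : IntegrableOn g s volume)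
    (hs0 : volume s ≠ 0) (hstop : volume s ≠ ⊤) :
    (‖c' - ⨍ w in s, g w‖₊ : ℝ≥0∞) ≤ (volume s)⁻¹ * ∫⁻ w in s, (‖c' - g w‖₊ : ℝ≥0∞) := by
  set μs := volume s with hμs
  have htR : (0:ℝ) < μs.toReal := ENNReal.toReal_pos hs0 hstop
  have hci : IntegrableOn (fun _ => c') s volume := integrableOn_const hstop
  have key : c' - ⨍ w in s, g w = (μs.toReal)⁻¹ • ∫ w in s, (c' - g w) := by
    rw [setAverage_eq, integral_sub hci hgi, setIntegral_const, measureReal_def, ← hμs, smul_sub, smul_smul,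
      inv_mul_cancel₀ (ne_of_gt htR), one_smul]
  have hnorm : ‖c' - ⨍ w in s, g w‖ ≤ (μs.toReal)⁻¹ * ∫ w in s, ‖c' - g w‖ := by
    rw [key, norm_smul, norm_inv, Real.norm_eq_abs, abs_of_pos htR]
    exact mul_le_mul_of_nonneg_left (norm_integral_le_integral_norm _) (by positivity)
  calc (‖c' - ⨍ w in s, g w‖₊ : ℝ≥0∞) = ENNReal.ofReal ‖c' - ⨍ w in s, g w‖ :=
        (ofReal_norm _).symm
    _ ≤ ENNReal.ofReal ((μs.toReal)⁻¹ * ∫ w in s, ‖c' - g w‖) := ENNReal.ofReal_le_ofReal hnorm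
    _ = ENNReal.ofReal (μs.toReal)⁻¹ * ENNReal.ofReal (∫ w in s, ‖c' - g w‖) :=
        ENNReal.ofReal_mul (by positivity)
    _ = (volume s)⁻¹ * ∫⁻ w in s, (‖c' - g w‖₊ : ℝ≥0∞) := by
        have := ofReal_integral_norm_eq_lintegral_enorm
          (f := fun w => c' - g w) (μ := volume.restrict s) (hci.sub hgi)
        rw [this, ENNReal.ofReal_inv_of_pos htR, ENNReal.ofReal_toReal hstop]
        rfl

lemma aux_cs_double {n : ℕ} (g : EuclideanSpace ℝ (Fin n) → ℂ) (hg : Measurable g)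
    (s : Set (EuclideanSpace ℝ (Fin n))) (hstop : volume s ≠ ⊤) :
    ∫⁻ z in s, ∫⁻ w in s, (‖g z - g w‖₊ : ℝ≥0∞) ≤
      volume s * (∫⁻ z in s, ∫⁻ w in s, (‖g z - g w‖₊ : ℝ≥0∞) ^ 2) ^ (1/2 : ℝ) := by
  set ν := volume.restrict s with hν
  have hνuniv : ν Set.univ ≤ volume s := by
    rw [hν, Measure.restrict_apply_univ]
  have hνtop : ν Set.univ ≠ ⊤ := fun h => hstop (top_le_iff.mp (h ▸ hνuniv))
  have hker : Measurable fun p : (EuclideanSpace ℝ (Fin n)) × (EuclideanSpace ℝ (Fin n)) =>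
      (‖g p.1 - g p.2‖₊ : ℝ≥0∞) := ((hg.comp measurable_fst).sub (hg.comp measurable_snd)).enorm
  have hG : Measurable fun z => ∫⁻ w, (‖g z - g w‖₊ : ℝ≥0∞) ^ 2 ∂ν :=
    Measurable.lintegral_prod_right' (f := fun p : _ × _ => (‖g p.1 - g p.2‖₊ : ℝ≥0∞) ^ 2)
      (hker.pow_const 2)
  set G := fun z => ∫⁻ w, (‖g z - g w‖₊ : ℝ≥0∞) ^ 2 ∂ν with hGdef
  have step1 : ∀ z, ∫⁻ w, (‖g z - g w‖₊ : ℝ≥0∞) ∂ν ≤ (ν Set.univ) ^ (1/2:ℝ) * (G z) ^ (1/2:ℝ) :=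
    fun z => aux_cs_one ν _ (((hg.const_sub (g z)).enorm).aemeasurable)
  have hhalf : ((ν Set.univ) ^ (1/2:ℝ)) ≠ ⊤ := ENNReal.rpow_ne_top_of_nonneg (by norm_num) hνtop
  calc ∫⁻ z, ∫⁻ w, (‖g z - g w‖₊ : ℝ≥0∞) ∂ν ∂ν
      ≤ ∫⁻ z, (ν Set.univ) ^ (1/2:ℝ) * (G z) ^ (1/2:ℝ) ∂ν := lintegral_mono fun z => step1 z
    _ = (ν Set.univ) ^ (1/2:ℝ) * ∫⁻ z, (G z) ^ (1/2:ℝ) ∂ν := lintegral_const_mul' _ _ hhalf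
    _ ≤ (ν Set.univ) ^ (1/2:ℝ) *
        ((ν Set.univ) ^ (1/2:ℝ) * (∫⁻ z, ((G z) ^ (1/2:ℝ)) ^ 2 ∂ν) ^ (1/2:ℝ)) :=
        mul_le_mul_right (aux_cs_one ν _ ((hG.pow_const (1/2:ℝ)).aemeasurable)) _
    _ = (ν Set.univ) * (∫⁻ z, G z ∂ν) ^ (1/2:ℝ) := by
        have hGz : ∀ z, ((G z) ^ (1/2:ℝ)) ^ (2:ℕ) = G z := fun z => by
          rw [← ENNReal.rpow_natCast ((G z) ^ (1/2:ℝ)) 2, ← ENNReal.rpow_mul]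
          norm_num
        simp only [hGz]
        rw [← mul_assoc, ← ENNReal.rpow_add_of_nonneg _ _ (by norm_num) (by norm_num)]
        norm_num
    _ ≤ volume s * (∫⁻ z in s, ∫⁻ w in s, (‖g z - g w‖₊ : ℝ≥0∞) ^ 2) ^ (1/2 : ℝ) :=
        mul_le_mul_left hνuniv _

lemma aux_osc {n : ℕ} (α : ℝ) (g : EuclideanSpace ℝ (Fin n) → ℂ) (hg : Measurable g)
    (x : EuclideanSpace ℝ (Fin n)) {R : ℝ} (hR : 0 < R)
    (hgi : IntegrableOn g (Metric.ball x R) volume) :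
    ∫⁻ z in Metric.ball x R, (‖g z - ⨍ w in Metric.ball x R, g w‖₊ : ℝ≥0∞) ≤
      ENNReal.ofReal (R ^ ((n:ℝ) - α)) * CampanatoNorm n α g := by
  set B := Metric.ball x R with hB
  have hB0 : volume B ≠ 0 := (measure_ball_pos volume x hR).ne'
  have hBtop : volume B ≠ ⊤ := measure_ball_lt_top.ne
  set N := CampanatoNorm n α g with hN
  set D := ∫⁻ y in B, ∫⁻ z in B, (‖g y - g z‖₊ : ℝ≥0∞) ^ 2 with hD
  calc ∫⁻ z in B, (‖g z - ⨍ w in B, g w‖₊ : ℝ≥0∞)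
      ≤ ∫⁻ z in B, (volume B)⁻¹ * ∫⁻ w in B, (‖g z - g w‖₊ : ℝ≥0∞) :=
        lintegral_mono fun z => aux_avg g (g z) hgi hB0 hBtop
    _ = (volume B)⁻¹ * ∫⁻ z in B, ∫⁻ w in B, (‖g z - g w‖₊ : ℝ≥0∞) :=
        lintegral_const_mul' _ _ (ENNReal.inv_ne_top.2 hB0)
    _ ≤ (volume B)⁻¹ * (volume B * D ^ (1/2 : ℝ)) :=
        mul_le_mul_right (aux_cs_double g hg B hBtop) _
    _ = D ^ (1/2 : ℝ) := by rw [← mul_assoc, ENNReal.inv_mul_cancel hB0 hBtop, one_mul]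
    _ ≤ (ENNReal.ofReal (R ^ (2 * ((n : ℝ) - α))) * N ^ 2) ^ (1/2 : ℝ) :=
        ENNReal.rpow_le_rpow (aux_camp n α g hR x) (by norm_num)
    _ = ENNReal.ofReal (R ^ ((n:ℝ) - α)) * N := by
        rw [ENNReal.mul_rpow_of_nonneg _ _ (by norm_num : (0:ℝ) ≤ 1/2),
          ENNReal.ofReal_rpow_of_pos (by positivity), ← Real.rpow_mul hR.le]
        rw [show 2 * ((n:ℝ) - α) * (1/2) = (n:ℝ) - α by ring]
        congr 1
        rw [← ENNReal.rpow_natCast N 2, ← ENNReal.rpow_mul]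
        norm_num

lemma aux_real_chain (n : ℕ) (α r : ℝ) (hα0 : 0 < α) (hr : 0 < r) (j : ℕ) :
    ((2^(j+1) * r)^n)⁻¹ * (2^(j+2) * r)^((n:ℝ)-α) ≤ 2^n * r^(-α) * ((2:ℝ)^(-α:ℝ))^j := by
  have h2 : (0:ℝ) < 2 := two_pos
  have e1 : ((2:ℝ)^(j+1) * r)^n = 2^(((j+1)*n : ℕ):ℝ) * r^((n:ℕ):ℝ) := by
    rw [mul_pow, ← pow_mul, Real.rpow_natCast, Real.rpow_natCast]
  have e2 : ((2:ℝ)^(j+2) * r)^((n:ℝ)-α) = 2^(((j+2):ℕ)*((n:ℝ)-α)) * r^((n:ℝ)-α) := by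
    rw [Real.mul_rpow (by positivity) hr.le, ← Real.rpow_natCast (2:ℝ) (j+2), ← Real.rpow_mul h2.le]
  have e3 : ((2:ℝ)^(-α:ℝ))^j = 2^(-α*j) := by
    rw [← Real.rpow_natCast ((2:ℝ)^(-α:ℝ)) j, ← Real.rpow_mul h2.le]
  rw [e1, e2, e3, mul_inv, ← Real.rpow_neg h2.le, ← Real.rpow_neg hr.le,
    ← Real.rpow_natCast (2:ℝ) n]
  have collect : ∀ a b c d : ℝ, (2:ℝ)^a * r^b * ((2:ℝ)^c * r^d) = 2^(a+c) * r^(b+d) := by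
    intro a b c d
    rw [Real.rpow_add h2, Real.rpow_add hr]
    ring
  rw [collect]
  have collect2 : (2:ℝ)^((n:ℕ):ℝ) * r^(-α) * 2^(-α*j) = 2^((n:ℝ) + -α*j) * r^(-α) := by
    rw [Real.rpow_add h2]; ring
  rw [collect2]
  push_cast
  rw [show -(((j:ℝ)+1)*(n:ℝ)) + ((j:ℝ)+2)*((n:ℝ)-α) = (n:ℝ) - ((j:ℝ)+2)*α by ring,
    show (-(n:ℝ)) + ((n:ℝ) - α) = -α by ring]
  apply mul_le_mul_of_nonneg_right _ (by positivity)
  apply Real.rpow_le_rpow_of_exponent_le one_le_two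
  nlinarith [hα0.le, Nat.cast_nonneg (α := ℝ) j]

lemma aux_real_main (n : ℕ) (α r t S : ℝ) (hα0 : 0 < α) (hr : 0 < r) (ht : 0 < t)
    (hS : 0 < S) (k : ℕ) :
    t / ((2^k * r)^(n+1)) * ((2^(k+2)*r)^((n:ℝ)-α) + (2^(k+2)*r)^n * (2^n * S * r^(-α)))
      ≤ (2^(2*n) + 2^(3*n) * S) * (2⁻¹)^k * (t * r^(-(1+α))) := by
  have h2 : (0:ℝ) < 2 := two_pos
  have collect : ∀ a b c d : ℝ, (2:ℝ)^a * r^b * ((2:ℝ)^c * r^d) = 2^(a+c) * r^(b+d) := by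
    intro a b c d
    rw [Real.rpow_add h2, Real.rpow_add hr]; ring
  have e1 : ((2:ℝ)^k * r)^(n+1) = 2^((k*(n+1):ℕ):ℝ) * r^(((n+1):ℕ):ℝ) := by
    rw [mul_pow, ← pow_mul, Real.rpow_natCast, Real.rpow_natCast]
  have einv : (((2:ℝ)^k * r)^(n+1))⁻¹ = 2^(-((k*(n+1):ℕ):ℝ)) * r^(-(((n+1):ℕ):ℝ)) := by
    rw [e1, mul_inv, ← Real.rpow_neg h2.le, ← Real.rpow_neg hr.le]
  have e2 : ((2:ℝ)^(k+2) * r)^((n:ℝ)-α) = 2^(((k+2):ℕ)*((n:ℝ)-α)) * r^((n:ℝ)-α) := by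
    rw [Real.mul_rpow (by positivity) hr.le, ← Real.rpow_natCast (2:ℝ) (k+2), ← Real.rpow_mul h2.le]
  have e3 : ((2:ℝ)^(k+2) * r)^n = 2^(((k+2)*n:ℕ):ℝ) * r^((n:ℕ):ℝ) := by
    rw [mul_pow, ← pow_mul, Real.rpow_natCast, Real.rpow_natCast]
  have e4 : ((2:ℝ)⁻¹)^k = 2^(-(k:ℝ)) := by
    rw [inv_pow, ← Real.rpow_natCast (2:ℝ) k, ← Real.rpow_neg h2.le]
  have e5 : (2:ℝ)^(2*n) = 2^((2*n:ℕ):ℝ) := (Real.rpow_natCast 2 (2*n)).symm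
  have e6 : (2:ℝ)^(3*n) = 2^((3*n:ℕ):ℝ) := (Real.rpow_natCast 2 (3*n)).symm
  have e7 : (2:ℝ)^n = 2^((n:ℕ):ℝ) := (Real.rpow_natCast 2 n).symm
  rw [div_eq_mul_inv, einv, e2, e3, e4, e5, e6, e7, mul_add,
    show ((2:ℝ)^((2*n:ℕ):ℝ) + 2^((3*n:ℕ):ℝ) * S) * 2^(-(k:ℝ)) * (t * r^(-(1+α))) =
      2^((2*n:ℕ):ℝ) * 2^(-(k:ℝ)) * (t * r^(-(1+α)))
        + 2^((3*n:ℕ):ℝ) * S * 2^(-(k:ℝ)) * (t * r^(-(1+α))) from by ring]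
  apply add_le_add
  · calc t * (2^(-((k*(n+1):ℕ):ℝ)) * r^(-(((n+1):ℕ):ℝ))) * (2^(((k+2):ℕ)*((n:ℝ)-α)) * r^((n:ℝ)-α))
        = t * (2^(-((k*(n+1):ℕ):ℝ) + ((k+2):ℕ)*((n:ℝ)-α)) * r^(-(((n+1):ℕ):ℝ) + ((n:ℝ)-α))) := by
          rw [mul_assoc, collect]
      _ ≤ t * (2^((2*(n:ℝ)) + -(k:ℝ)) * r^(-(1+α))) := by
          apply mul_le_mul_of_nonneg_left _ ht.le
          push_cast
          rw [show -(((k:ℝ))*((n:ℝ)+1)) + ((k:ℝ)+2)*((n:ℝ)-α) = 2*(n:ℝ) - 2*α - (k:ℝ)*(1+α) by ring,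
            show -((n:ℝ)+1) + ((n:ℝ)-α) = -(1+α) by ring]
          apply mul_le_mul_of_nonneg_right _ (by positivity)
          apply Real.rpow_le_rpow_of_exponent_le one_le_two
          nlinarith [hα0.le, Nat.cast_nonneg (α := ℝ) k]
      _ = 2^((2*n:ℕ):ℝ) * 2^(-(k:ℝ)) * (t * r^(-(1+α))) := by
          rw [Real.rpow_add h2]; push_cast; ring
  · calc t * (2^(-((k*(n+1):ℕ):ℝ)) * r^(-(((n+1):ℕ):ℝ))) * (2^(((k+2)*n:ℕ):ℝ) * r^((n:ℕ):ℝ) * (2^((n:ℕ):ℝ) * S * r^(-α)))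
        = (t * S) * (2^(-((k*(n+1):ℕ):ℝ) + (((k+2)*n:ℕ):ℝ) + ((n:ℕ):ℝ)) * r^(-(((n+1):ℕ):ℝ) + ((n:ℕ):ℝ) + -α)) := by
          rw [Real.rpow_add h2, Real.rpow_add h2, Real.rpow_add hr, Real.rpow_add hr]
          ring
      _ ≤ (t * S) * (2^((3*(n:ℝ)) + -(k:ℝ)) * r^(-(1+α))) := by
          apply mul_le_mul_of_nonneg_left _ (by positivity)
          push_cast
          rw [show -(((k:ℝ))*((n:ℝ)+1)) + ((k:ℝ)+2)*(n:ℝ) + (n:ℝ) = 3*(n:ℝ) + -(k:ℝ) by ring,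
            show -((n:ℝ)+1) + (n:ℝ) + -α = -(1+α) by ring]
      _ = 2^((3*n:ℕ):ℝ) * S * 2^(-(k:ℝ)) * (t * r^(-(1+α))) := by
          rw [Real.rpow_add h2]; push_cast; ring

lemma aux_camp_congr (n : ℕ) (α : ℝ) {f g : EuclideanSpace ℝ (Fin n) → ℂ}
    (h : f =ᵐ[volume] g) : CampanatoNorm n α f = CampanatoNorm n α g := by
  have hd : ∀ (x : EuclideanSpace ℝ (Fin n)) (R : ℝ),
      ∫⁻ y in Metric.ball x R, ∫⁻ z in Metric.ball x R, (‖f y - f z‖₊:ℝ≥0∞)^2 =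
      ∫⁻ y in Metric.ball x R, ∫⁻ z in Metric.ball x R, (‖g y - g z‖₊:ℝ≥0∞)^2 := by
    intro x R
    apply lintegral_congr_ae
    filter_upwards [ae_restrict_of_ae h] with y hy
    apply lintegral_congr_ae
    filter_upwards [ae_restrict_of_ae h] with z hz
    rw [hy, hz]
  unfold CampanatoNorm
  exact iSup_congr fun R => iSup_congr fun _ => iSup_congr fun x => by rw [hd x R]

/-- Corrected tail estimate for the kernel `ψ_t`, applied to the far part
`f·1_{ℝⁿ∖2B}`: for `y ∈ B(x₀,r)`,
`∫_{ℝⁿ∖B(x₀,2r)} t|f(z)−f_{2B}|/(t+|y−z|)^{n+1} dz ≤ C t r^{−(1+α)} ‖f‖_{𝓛_{2,n−2α}}`. -/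
theorem tail_estimate (n : ℕ) (hn : 1 ≤ n) (α : ℝ) (hα0 : 0 < α) (hα1 : α < 1) :
    ∃ C > (0 : ℝ), ∀ f : EuclideanSpace ℝ (Fin n) → ℂ,
      LocallyIntegrable f volume →
      CampanatoNorm n α f ≠ ⊤ →
      ∀ (x₀ : EuclideanSpace ℝ (Fin n)), ∀ r > (0 : ℝ), ∀ t > (0 : ℝ),
        ∀ y ∈ Metric.ball x₀ r,
          ∫⁻ z in (Metric.ball x₀ (2 * r))ᶜ,
              ENNReal.ofReal (t / (t + ‖y - z‖) ^ (n + 1)) *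
                (‖f z - ⨍ w in Metric.ball x₀ (2 * r), f w‖₊ : ℝ≥0∞) ≤
            ENNReal.ofReal (C * t * r ^ (-(1 + α))) * CampanatoNorm n α f := by
  classical
  set S : ℝ := (1 - (2:ℝ)^(-α:ℝ))⁻¹ with hSdef
  have hq0 : (0:ℝ) ≤ (2:ℝ)^(-α:ℝ) := le_of_lt (Real.rpow_pos_of_pos two_pos _)
  have hq1 : (2:ℝ)^(-α:ℝ) < 1 :=
    Real.rpow_lt_one_of_one_lt_of_neg one_lt_two (neg_lt_zero.mpr hα0)
  have hS : 0 < S := by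
    rw [hSdef]; exact inv_pos.2 (by linarith)
  refine ⟨2 * (2^(2*n) + 2^(3*n) * S), by positivity, ?_⟩
  intro f hf hN x₀ r hr t ht y hy
  -- measurable representative
  obtain ⟨g, hgm, hfg⟩ : ∃ g, Measurable g ∧ f =ᵐ[volume] g := by
    have h := hf.aestronglyMeasurable.aemeasurable
    exact ⟨h.mk f, h.measurable_mk, h.ae_eq_mk⟩
  have hcampfg : CampanatoNorm n α f = CampanatoNorm n α g := aux_camp_congr n α hfg
  set N := CampanatoNorm n α g with hNg
  -- geometry and measure facts
  haveI : Nonempty (Fin n) := ⟨⟨0, hn⟩⟩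
  haveI : Nontrivial (EuclideanSpace ℝ (Fin n)) := inferInstance
  set ω : ℝ≥0∞ := volume (Metric.ball (0 : EuclideanSpace ℝ (Fin n)) 1) with hωdef
  have hω0 : ω ≠ 0 := (measure_ball_pos volume _ one_pos).ne'
  have hωtop : ω ≠ ⊤ := measure_ball_lt_top.ne
  set ωr : ℝ := ω.toReal with hωrdef
  have hωr : 0 < ωr := ENNReal.toReal_pos hω0 hωtop
  have hωeq : ω = ENNReal.ofReal ωr := (ENNReal.ofReal_toReal hωtop).symm
  have hvol : ∀ ρ : ℝ, 0 ≤ ρ →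
      volume (Metric.ball x₀ ρ) = ENNReal.ofReal (ρ^n) * ω := by
    intro ρ hρ
    rw [Measure.addHaar_ball volume x₀ hρ]
    congr 2
    rw [finrank_euclideanSpace]
    simp
  have hrad : ∀ k : ℕ, (0:ℝ) < 2^(k+1) * r := fun k => by positivity
  have hInt : ∀ R : ℝ, IntegrableOn g (Metric.ball x₀ R) volume := fun R =>
    ((hf.integrableOn_isCompact (isCompact_closedBall x₀ R)).mono_set
      ball_subset_closedBall).congr (ae_restrict_of_ae hfg)
  set c : ℕ → ℂ := fun j => ⨍ w in Metric.ball x₀ (2^(j+1) * r), g w with hc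
  -- chain step
  have hstep : ∀ j : ℕ, (‖c (j+1) - c j‖₊ : ℝ≥0∞) ≤
      ENNReal.ofReal (ωr⁻¹ * (2^n * r^(-α) * ((2:ℝ)^(-α:ℝ))^j)) * N := by
    intro j
    have hball0 : volume (Metric.ball x₀ (2^(j+1) * r)) ≠ 0 :=
      (measure_ball_pos volume _ (hrad j)).ne'
    have hballtop : volume (Metric.ball x₀ (2^(j+1) * r)) ≠ ⊤ := measure_ball_lt_top.ne
    have h1 := aux_avg g (c (j+1)) (hInt (2^(j+1) * r)) hball0 hballtop
    have h2 : ∫⁻ w in Metric.ball x₀ (2^(j+1) * r), (‖c (j+1) - g w‖₊ : ℝ≥0∞) ≤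
        ENNReal.ofReal ((2^(j+2)*r) ^ ((n:ℝ) - α)) * N := by
      calc ∫⁻ w in Metric.ball x₀ (2^(j+1) * r), (‖c (j+1) - g w‖₊ : ℝ≥0∞)
          = ∫⁻ w in Metric.ball x₀ (2^(j+1) * r), (‖g w - c (j+1)‖₊ : ℝ≥0∞) :=
            lintegral_congr fun w => by rw [← nnnorm_neg, neg_sub]
        _ ≤ ∫⁻ w in Metric.ball x₀ (2^(j+2) * r), (‖g w - c (j+1)‖₊ : ℝ≥0∞) :=
            lintegral_mono_set (ball_subset_ball (by
              have : (2:ℝ)^(j+1) ≤ 2^(j+2) := pow_le_pow_right₀ one_le_two (by omega)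
              nlinarith))
        _ ≤ ENNReal.ofReal ((2^(j+2)*r) ^ ((n:ℝ) - α)) * N :=
            aux_osc α g hgm x₀ (by positivity) (hInt (2^(j+2) * r))
    have hvolinv : (volume (Metric.ball x₀ (2^(j+1) * r)))⁻¹ =
        ENNReal.ofReal (((2^(j+1) * r)^n)⁻¹ * ωr⁻¹) := by
      rw [hvol _ (hrad j).le, hωeq, ← ENNReal.ofReal_mul (by positivity),
        ← ENNReal.ofReal_inv_of_pos (by positivity), mul_inv]
    calc (‖c (j+1) - c j‖₊ : ℝ≥0∞)
        ≤ (volume (Metric.ball x₀ (2^(j+1) * r)))⁻¹ *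
            ∫⁻ w in Metric.ball x₀ (2^(j+1) * r), (‖c (j+1) - g w‖₊ : ℝ≥0∞) := h1
      _ ≤ (volume (Metric.ball x₀ (2^(j+1) * r)))⁻¹ *
            (ENNReal.ofReal ((2^(j+2)*r) ^ ((n:ℝ) - α)) * N) := mul_le_mul_right h2 _
      _ = ENNReal.ofReal (((2^(j+1) * r)^n)⁻¹ * ωr⁻¹ * ((2^(j+2)*r) ^ ((n:ℝ) - α))) * N := by
          rw [hvolinv, ← mul_assoc, ← ENNReal.ofReal_mul (by positivity)]
      _ ≤ ENNReal.ofReal (ωr⁻¹ * (2^n * r^(-α) * ((2:ℝ)^(-α:ℝ))^j)) * N := by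
          apply mul_le_mul_left
          apply ENNReal.ofReal_le_ofReal
          have := aux_real_chain n α r hα0 hr j
          calc ((2^(j+1) * r)^n)⁻¹ * ωr⁻¹ * ((2^(j+2)*r) ^ ((n:ℝ) - α))
              = ωr⁻¹ * (((2^(j+1) * r)^n)⁻¹ * (2^(j+2)*r) ^ ((n:ℝ) - α)) := by ring
            _ ≤ ωr⁻¹ * (2^n * r^(-α) * ((2:ℝ)^(-α:ℝ))^j) :=
                mul_le_mul_of_nonneg_left this (by positivity)
  -- chain sum
  have hchain : ∀ k : ℕ, (‖c (k+1) - c 0‖₊ : ℝ≥0∞) ≤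
      ENNReal.ofReal (ωr⁻¹ * (2^n * r^(-α)) * S) * N := by
    intro k
    have hsum : ∑ j ∈ Finset.range (k+1), (ωr⁻¹ * (2^n * r^(-α) * ((2:ℝ)^(-α:ℝ))^j)) ≤
        ωr⁻¹ * (2^n * r^(-α)) * S := by
      have hgs : ∑ j ∈ Finset.range (k+1), ((2:ℝ)^(-α:ℝ))^j ≤ S := by
        rw [hSdef]
        have hsummable : Summable fun j : ℕ => ((2:ℝ)^(-α:ℝ))^j :=
          summable_geometric_of_lt_one hq0 hq1
        have := Summable.sum_le_tsum (Finset.range (k+1))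
          (fun i _ => pow_nonneg hq0 i) hsummable
        rwa [tsum_geometric_of_lt_one hq0 hq1] at this
      calc ∑ j ∈ Finset.range (k+1), (ωr⁻¹ * (2^n * r^(-α) * ((2:ℝ)^(-α:ℝ))^j))
          = ωr⁻¹ * (2^n * r^(-α)) * ∑ j ∈ Finset.range (k+1), ((2:ℝ)^(-α:ℝ))^j := by
            rw [Finset.mul_sum]
            exact Finset.sum_congr rfl fun j _ => by ring
        _ ≤ ωr⁻¹ * (2^n * r^(-α)) * S := by
            apply mul_le_mul_of_nonneg_left hgs (by positivity)
    calc (‖c (k+1) - c 0‖₊ : ℝ≥0∞)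
        ≤ ∑ j ∈ Finset.range (k+1), (‖c (j+1) - c j‖₊ : ℝ≥0∞) := aux_telescope c k
      _ ≤ ∑ j ∈ Finset.range (k+1),
            ENNReal.ofReal (ωr⁻¹ * (2^n * r^(-α) * ((2:ℝ)^(-α:ℝ))^j)) * N :=
          Finset.sum_le_sum fun j _ => hstep j
      _ = ENNReal.ofReal (∑ j ∈ Finset.range (k+1),
            (ωr⁻¹ * (2^n * r^(-α) * ((2:ℝ)^(-α:ℝ))^j))) * N := by
          rw [ENNReal.ofReal_sum_of_nonneg (fun i _ => by positivity), Finset.sum_mul]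
      _ ≤ ENNReal.ofReal (ωr⁻¹ * (2^n * r^(-α)) * S) * N :=
          mul_le_mul_left (ENNReal.ofReal_le_ofReal hsum) _
  -- switch integrand from f to g
  have havg : (⨍ w in Metric.ball x₀ (2 * r), f w) = c 0 := by
    rw [hc]
    show _ = ⨍ w in Metric.ball x₀ (2^(0+1) * r), g w
    rw [show (2:ℝ)^(0+1) * r = 2 * r by norm_num]
    exact average_congr (ae_restrict_of_ae hfg)
  have hLHS : ∫⁻ z in (Metric.ball x₀ (2 * r))ᶜ,
      ENNReal.ofReal (t / (t + ‖y - z‖) ^ (n + 1)) *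
        (‖f z - ⨍ w in Metric.ball x₀ (2 * r), f w‖₊ : ℝ≥0∞) =
      ∫⁻ z in (Metric.ball x₀ (2 * r))ᶜ,
      ENNReal.ofReal (t / (t + ‖y - z‖) ^ (n + 1)) * (‖g z - c 0‖₊ : ℝ≥0∞) := by
    apply lintegral_congr_ae
    filter_upwards [ae_restrict_of_ae hfg] with z hz
    rw [hz, havg]
  rw [hcampfg, hLHS]
  -- decompose into annuli
  set E : ℕ → Set (EuclideanSpace ℝ (Fin n)) := fun k =>
    Metric.ball x₀ (2^(k+2) * r) \ Metric.ball x₀ (2^(k+1) * r) with hE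
  have hEmeas : ∀ k, MeasurableSet (E k) := fun k =>
    measurableSet_ball.diff measurableSet_ball
  have hEdisj : Pairwise (Function.onFun Disjoint E) := by
    have key : ∀ i j : ℕ, i < j → Disjoint (E i) (E j) := by
      intro i j hij
      apply Set.disjoint_left.2
      intro z hzi hzj
      have h1 : dist z x₀ < 2^(i+2) * r := mem_ball.mp hzi.1
      have h2 : ¬ (dist z x₀ < 2^(j+1) * r) := fun h => hzj.2 (mem_ball.mpr h)
      apply h2
      have : (2:ℝ)^(i+2) ≤ 2^(j+1) := pow_le_pow_right₀ one_le_two (by omega)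
      nlinarith
    intro i j hij
    rcases hij.lt_or_gt with h | h
    · exact key i j h
    · exact (key j i h).symm
  rw [aux_decomp n x₀ hr, lintegral_iUnion hEmeas hEdisj]
  -- bound each annulus integral
  have hterm : ∀ k : ℕ, ∫⁻ z in E k,
      ENNReal.ofReal (t / (t + ‖y - z‖) ^ (n + 1)) * (‖g z - c 0‖₊ : ℝ≥0∞) ≤
      ENNReal.ofReal ((2^(2*n) + 2^(3*n) * S) * (2⁻¹)^k * (t * r ^ (-(1 + α)))) * N := by
    intro k
    have hkr : (0:ℝ) < 2^k * r := by positivity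
    have hker : ∀ z ∈ E k, ENNReal.ofReal (t / (t + ‖y - z‖) ^ (n + 1)) ≤
        ENNReal.ofReal (t / ((2^k * r) ^ (n+1))) := by
      intro z hz
      apply ENNReal.ofReal_le_ofReal
      have hzx : 2^(k+1) * r ≤ dist z x₀ := not_lt.mp fun h => hz.2 (mem_ball.mpr h)
      have hyz : 2^k * r ≤ ‖y - z‖ := by
        have hyx : dist y x₀ < r := mem_ball.mp hy
        have htr : dist z x₀ ≤ dist z y + dist y x₀ := dist_triangle z y x₀
        have h2k : (2:ℝ)^k * 2 = 2^(k+1) := by rw [pow_succ]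
        have hdyz : dist z y = ‖y - z‖ := by rw [dist_comm, dist_eq_norm]
        have h1 : (1:ℝ) ≤ 2^k := one_le_pow₀ one_le_two
        nlinarith
      apply div_le_div_of_nonneg_left ht.le (by positivity)
      calc (2^k * r) ^ (n+1) ≤ ‖y - z‖ ^ (n+1) := pow_le_pow_left₀ hkr.le hyz _
        _ ≤ (t + ‖y - z‖) ^ (n+1) := pow_le_pow_left₀ (by positivity) (by linarith) _
    have hconst_ne_top : ENNReal.ofReal (t / ((2^k * r) ^ (n+1))) ≠ ⊤ := ENNReal.ofReal_ne_top
    have htri : ∀ z, (‖g z - c 0‖₊ : ℝ≥0∞) ≤ (‖g z - c (k+1)‖₊ : ℝ≥0∞) + ‖c (k+1) - c 0‖₊ := by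
      intro z
      have := nnnorm_add_le (g z - c (k+1)) (c (k+1) - c 0)
      simp only [sub_add_sub_cancel] at this
      exact_mod_cast this
    have hballtop : volume (Metric.ball x₀ (2^(k+2) * r)) ≠ ⊤ := measure_ball_lt_top.ne
    calc ∫⁻ z in E k, ENNReal.ofReal (t / (t + ‖y - z‖) ^ (n + 1)) * (‖g z - c 0‖₊ : ℝ≥0∞)
        ≤ ∫⁻ z in E k, ENNReal.ofReal (t / ((2^k * r) ^ (n+1))) * (‖g z - c 0‖₊ : ℝ≥0∞) :=
          setLIntegral_mono' (hEmeas k) fun z hz => mul_le_mul_left (hker z hz) _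
      _ = ENNReal.ofReal (t / ((2^k * r) ^ (n+1))) * ∫⁻ z in E k, (‖g z - c 0‖₊ : ℝ≥0∞) :=
          lintegral_const_mul' _ _ hconst_ne_top
      _ ≤ ENNReal.ofReal (t / ((2^k * r) ^ (n+1))) *
            ∫⁻ z in Metric.ball x₀ (2^(k+2) * r), (‖g z - c 0‖₊ : ℝ≥0∞) :=
          mul_le_mul_right (lintegral_mono_set Set.diff_subset) _
      _ ≤ ENNReal.ofReal (t / ((2^k * r) ^ (n+1))) *
            ((∫⁻ z in Metric.ball x₀ (2^(k+2) * r), (‖g z - c (k+1)‖₊ : ℝ≥0∞)) +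
              ∫⁻ _ in Metric.ball x₀ (2^(k+2) * r), (‖c (k+1) - c 0‖₊ : ℝ≥0∞)) := by
          apply mul_le_mul_right
          rw [← lintegral_add_right _ measurable_const]
          exact lintegral_mono fun z => htri z
      _ ≤ ENNReal.ofReal (t / ((2^k * r) ^ (n+1))) *
            (ENNReal.ofReal ((2^(k+2)*r) ^ ((n:ℝ) - α)) * N +
              ENNReal.ofReal ((2^(k+2)*r)^n * (2^n * S * r^(-α))) * N) := by
          apply mul_le_mul_right
          apply add_le_add
          · exact aux_osc α g hgm x₀ (by positivity) (hInt (2^(k+2) * r))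
          · rw [setLIntegral_const]
            calc (‖c (k+1) - c 0‖₊ : ℝ≥0∞) * volume (Metric.ball x₀ (2^(k+2) * r))
                ≤ (ENNReal.ofReal (ωr⁻¹ * (2^n * r^(-α)) * S) * N) *
                    (ENNReal.ofReal ((2^(k+2)*r)^n) * ω) :=
                  mul_le_mul (hchain k) (le_of_eq (hvol _ (by positivity))) zero_le zero_le
              _ = ENNReal.ofReal ((2^(k+2)*r)^n * (2^n * S * r^(-α))) * N := by
                  rw [hωeq,
                    show (ENNReal.ofReal (ωr⁻¹ * (2^n * r^(-α)) * S) * N) *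
                        (ENNReal.ofReal ((2^(k+2)*r)^n) * ENNReal.ofReal ωr) =
                      (ENNReal.ofReal (ωr⁻¹ * (2^n * r^(-α)) * S) *
                        (ENNReal.ofReal ((2^(k+2)*r)^n) * ENNReal.ofReal ωr)) * N from by ring,
                    ← ENNReal.ofReal_mul (by positivity), ← ENNReal.ofReal_mul (by positivity)]
                  congr 2
                  field_simp
      _ ≤ ENNReal.ofReal ((2^(2*n) + 2^(3*n) * S) * (2⁻¹)^k * (t * r ^ (-(1 + α)))) * N := by
          rw [← add_mul, ← mul_assoc]
          apply mul_le_mul_left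
          rw [← ENNReal.ofReal_add (by positivity) (by positivity),
            ← ENNReal.ofReal_mul (by positivity)]
          exact ENNReal.ofReal_le_ofReal (aux_real_main n α r t S hα0 hr ht hS k)
  -- sum the series
  calc ∑' k : ℕ, ∫⁻ z in E k,
        ENNReal.ofReal (t / (t + ‖y - z‖) ^ (n + 1)) * (‖g z - c 0‖₊ : ℝ≥0∞)
      ≤ ∑' k : ℕ, ENNReal.ofReal ((2^(2*n) + 2^(3*n) * S) * (2⁻¹)^k * (t * r ^ (-(1 + α)))) * N :=
        ENNReal.tsum_le_tsum fun k => hterm k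
    _ = (∑' k : ℕ, ENNReal.ofReal ((2^(2*n) + 2^(3*n) * S) * (2⁻¹)^k * (t * r ^ (-(1 + α))))) * N :=
        ENNReal.tsum_mul_right
    _ ≤ ENNReal.ofReal (2 * (2^(2*n) + 2^(3*n) * S) * t * r ^ (-(1 + α))) * N := by
        apply mul_le_mul_left
        have heq : ∀ k : ℕ, ENNReal.ofReal ((2^(2*n) + 2^(3*n) * S) * (2⁻¹)^k * (t * r ^ (-(1 + α)))) =
            ENNReal.ofReal ((2^(2*n) + 2^(3*n) * S) * (t * r ^ (-(1 + α)))) * ENNReal.ofReal (2⁻¹) ^ k := by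
          intro k
          rw [← ENNReal.ofReal_pow (by norm_num), ← ENNReal.ofReal_mul (by positivity)]
          congr 1
          ring
        simp_rw [heq]
        rw [ENNReal.tsum_mul_left, ENNReal.tsum_geometric]
        have h12 : ENNReal.ofReal (2⁻¹:ℝ) = (2⁻¹ : ℝ≥0∞) := by
          rw [ENNReal.ofReal_inv_of_pos two_pos]
          norm_num
        rw [h12]
        have hgeo : ((1:ℝ≥0∞) - 2⁻¹)⁻¹ = 2 := by
          have h1 : (1:ℝ≥0∞) - 2⁻¹ = 2⁻¹ := by
            apply ENNReal.sub_eq_of_eq_add (by norm_num)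
            rw [← two_mul, ENNReal.mul_inv_cancel (by norm_num) (by norm_num)]
          rw [h1, inv_inv]
        rw [hgeo]
        rw [← ENNReal.ofReal_ofNat 2, ← ENNReal.ofReal_mul (by positivity)]
        apply ENNReal.ofReal_le_ofReal
        rw [mul_comm]
        apply le_of_eq
        ring
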